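/- Every interpolating Blaschke product has weak Property 𝔥: if B is a Blaschke product whose zero sequence {α_n} is uniformly separated, then there exists η ∈ (0,1) such that the closure of each connected component of the level set Ω_{B,η} = {z ∈ 𝔻 : |B(z)| < η} is contained in 𝔻 and δ_{B,η} < 1. -/

import Mathlib

noncomputable section

/-- The level set Ω_{f,θ} = {z ∈ 𝔻 : |f(z)| < θ}. -/
def levelSet (f : ℂ → ℂ) (θ : ℝ) : Set ℂ :=
  {z : ℂ | ‖z‖ < 1 ∧ ‖f z‖ < θ}

/-- An inner function: holomorphic and bounded by 1 on 𝔻, with radial limits of modulus 1 a.e. -/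
def IsInner (u : ℂ → ℂ) : Prop :=
  DifferentiableOn ℂ u (Metric.ball (0:ℂ) 1) ∧
  (∀ z ∈ Metric.ball (0:ℂ) 1, ‖u z‖ ≤ 1) ∧
  (∀ᵐ θ : ℝ ∂MeasureTheory.volume,
    Filter.Tendsto
      (fun r : ℝ => ‖u ((r : ℂ) * Complex.exp ((θ : ℂ) * Complex.I))‖)
      (nhdsWithin 1 (Set.Iio 1)) (nhds 1))

/-- The pseudo-hyperbolic distance on 𝔻. -/
def pseudoDist (z w : ℂ) : ℝ :=
  ‖z - w‖ / ‖1 - (starRingEnd ℂ) z * w‖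

/-- δ_{u,η} : sup of pseudo-hyperbolic distances of pairs lying in a common component of Ω_{u,η}. -/
def deltaLevel (u : ℂ → ℂ) (η : ℝ) : ℝ :=
  sSup {d : ℝ | ∃ z₁ z₂ : ℂ, z₁ ∈ levelSet u η ∧
    z₂ ∈ connectedComponentIn (levelSet u η) z₁ ∧ d = pseudoDist z₁ z₂}

/-- Property 𝔅. -/
def PropertyB (u : ℂ → ℂ) : Prop :=
  ∀ θ ∈ Set.Ioo (0:ℝ) 1, ∀ z ∈ levelSet u θ,
    closure (connectedComponentIn (levelSet u θ) z) ⊆ Metric.ball (0:ℂ) 1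

/-- θ-weak Property 𝔅. -/
def WeakPropertyBAt (u : ℂ → ℂ) (θ : ℝ) : Prop :=
  θ ∈ Set.Ioo (0:ℝ) 1 ∧ ∀ z ∈ levelSet u θ,
    closure (connectedComponentIn (levelSet u θ) z) ⊆ Metric.ball (0:ℂ) 1

/-- η-weak Property 𝔥. -/
def WeakPropertyHAt (u : ℂ → ℂ) (η : ℝ) : Prop :=
  WeakPropertyBAt u η ∧ deltaLevel u η < 1

/-- Supremum norm over the unit disk. -/
def supNormD (f : ℂ → ℂ) : ℝ :=
  ⨆ z : (Metric.ball (0:ℂ) 1), ‖f (z : ℂ)‖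

/-- A Blaschke product. -/
def IsBlaschkeProduct (B : ℂ → ℂ) : Prop :=
  ∃ (ι : Type) (_ : Countable ι) (m : ℕ) (lam : ℂ) (α : ι → ℂ),
    ‖lam‖ = 1 ∧
    (∀ n, ‖α n‖ < 1 ∧ α n ≠ 0) ∧
    (Summable fun n => 1 - ‖α n‖) ∧
    ∀ z ∈ Metric.ball (0:ℂ) 1,
      B z = lam * z ^ m *
        ∏' n, ((‖α n‖ : ℂ) / α n) * ((α n - z) / (1 - (starRingEnd ℂ) (α n) * z))

/-- Order of vanishing (multiplicity of zero) via iterated derivatives. -/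
def zeroOrder (f : ℂ → ℂ) (z : ℂ) : ℕ :=
  sInf {n : ℕ | iteratedDeriv n f z ≠ 0}


/-- The Blaschke factor with zero a (the factor z itself when a = 0). -/
def blaschkeFactor (a z : ℂ) : ℂ :=
  if a = 0 then z
  else ((‖a‖ : ℂ) / a) * ((a - z) / (1 - (starRingEnd ℂ) a * z))

/-- A sequence of points in 𝔻 is uniformly separated if
inf_n ∏_{k ≠ n} ρ(α_k, α_n) > 0. -/
def UniformlySeparated {ι : Type} (α : ι → ℂ) : Prop :=
  ∃ c > (0:ℝ), ∀ n : ι, c ≤ ∏' k : {k : ι // k ≠ n}, pseudoDist (α (k : ι)) (α n)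

/-- An interpolating Blaschke product: a Blaschke product whose zero sequence is
uniformly separated. -/
def IsInterpolatingBlaschke (f : ℂ → ℂ) : Prop :=
  ∃ (ι : Type) (_ : Countable ι) (lam : ℂ) (α : ι → ℂ),
    ‖lam‖ = 1 ∧
    (∀ n, ‖α n‖ < 1) ∧
    (Summable fun n => 1 - ‖α n‖) ∧
    (∀ z ∈ Metric.ball (0:ℂ) 1, f z = lam * ∏' n, blaschkeFactor (α n) z) ∧
    UniformlySeparated α

namespace BPaux
open MeasureTheory
attribute [local instance] Classical.propDecidable
set_option maxHeartbeats 1000000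
variable {ι : Type}


def dd (x y : ℂ) : ℝ := ‖1 - (starRingEnd ℂ) x * y‖

def QQ (x y : ℂ) : ℝ := ((1 - (‖x‖)^2) * (1 - (‖y‖)^2)) / (dd x y)^2

def dep (x : ℂ) : ℝ := 1 - ‖x‖

lemma dd_symm (x y : ℂ) : dd x y = dd y x := by
  unfold dd
  rw [← Complex.norm_conj (1 - (starRingEnd ℂ) x * y)]
  congr 1
  simp [map_sub, map_mul, mul_comm]

lemma dd_sq (x y : ℂ) :
    (dd x y)^2 = (‖x - y‖)^2 + (1 - (‖x‖)^2) * (1 - (‖y‖)^2) := by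
  unfold dd
  simp only [Complex.sq_norm]
  simp [Complex.normSq_apply, Complex.sub_re, Complex.sub_im, Complex.mul_re, Complex.mul_im,
    Complex.conj_re, Complex.conj_im, Complex.one_re, Complex.one_im]
  ring

lemma one_sub_mul_le_dd (x y : ℂ) : 1 - ‖x‖ * ‖y‖ ≤ dd x y := by
  unfold dd
  have h := norm_sub_norm_le 1 ((starRingEnd ℂ) x * y)
  simpa [map_mul] using h

lemma dep_le_dd_left (x y : ℂ) (hy : ‖y‖ ≤ 1) : dep x ≤ dd x y := by
  have h := one_sub_mul_le_dd x y
  have : ‖x‖ * ‖y‖ ≤ ‖x‖ := by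
    nlinarith [norm_nonneg x]
  unfold dep; linarith

lemma dep_le_dd_right (x y : ℂ) (hx : ‖x‖ ≤ 1) : dep y ≤ dd x y := by
  rw [dd_symm]; exact dep_le_dd_left y x hx

lemma dd_nonneg (x y : ℂ) : 0 ≤ dd x y := norm_nonneg _

lemma dd_pos (x y : ℂ) (hx : ‖x‖ < 1) (hy : ‖y‖ ≤ 1) : 0 < dd x y := by
  have := one_sub_mul_le_dd x y
  nlinarith [norm_nonneg x, norm_nonneg y]

lemma dd_le_two (x y : ℂ) (hx : ‖x‖ ≤ 1) (hy : ‖y‖ ≤ 1) : dd x y ≤ 2 := by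
  unfold dd
  calc ‖1 - (starRingEnd ℂ) x * y‖
      ≤ ‖1‖ + ‖(starRingEnd ℂ) x * y‖ := norm_sub_le _ _
    _ ≤ 2 := by simp [map_mul]; nlinarith [norm_nonneg x, norm_nonneg y]

lemma abs_sub_le_dd (x y : ℂ) (hx : ‖x‖ ≤ 1) (hy : ‖y‖ ≤ 1) :
    ‖x - y‖ ≤ dd x y := by
  have h := dd_sq x y
  have hx2 : (‖x‖)^2 ≤ 1 := by nlinarith [norm_nonneg x]
  have hy2 : (‖y‖)^2 ≤ 1 := by nlinarith [norm_nonneg y]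
  have hprod : 0 ≤ (1 - (‖x‖)^2) * (1 - (‖y‖)^2) := by nlinarith
  have h1 : (‖x-y‖)^2 ≤ (dd x y)^2 := by nlinarith
  have h2 := norm_nonneg (x - y)
  have h3 := dd_nonneg x y
  nlinarith

lemma dd_triangle (x u y : ℂ) (hx : ‖x‖ ≤ 1) (hu : ‖u‖ ≤ 1)
    (hy : ‖y‖ ≤ 1) : dd x y ≤ dd x u + dd u y := by
  unfold dd
  have key : (1 : ℂ) - (starRingEnd ℂ) x * y = (1 - (starRingEnd ℂ) x * u) + (starRingEnd ℂ) x * (u - y) := by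
    ring
  rw [key]
  calc ‖(1 - (starRingEnd ℂ) x * u) + (starRingEnd ℂ) x * (u - y)‖
      ≤ ‖1 - (starRingEnd ℂ) x * u‖ + ‖(starRingEnd ℂ) x * (u - y)‖ :=
        norm_add_le _ _
    _ ≤ ‖1 - (starRingEnd ℂ) x * u‖ + ‖u - y‖ := by
        rw [norm_mul]
        have hcx : ‖(starRingEnd ℂ) x‖ = ‖x‖ := Complex.norm_conj x
        nlinarith [norm_nonneg (u - y), norm_nonneg x]
    _ ≤ ‖1 - (starRingEnd ℂ) x * u‖ + ‖1 - (starRingEnd ℂ) u * y‖ := by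
        have := abs_sub_le_dd u y hu hy
        unfold dd at this; linarith

lemma dd_le_dd_add_abs (x u y : ℂ) (hx : ‖x‖ ≤ 1) :
    dd x y ≤ dd x u + ‖u - y‖ := by
  unfold dd
  have key : (1 : ℂ) - (starRingEnd ℂ) x * y = (1 - (starRingEnd ℂ) x * u) + (starRingEnd ℂ) x * (u - y) := by
    ring
  rw [key]
  calc ‖(1 - (starRingEnd ℂ) x * u) + (starRingEnd ℂ) x * (u - y)‖
      ≤ ‖1 - (starRingEnd ℂ) x * u‖ + ‖(starRingEnd ℂ) x * (u - y)‖ :=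
        norm_add_le _ _
    _ ≤ ‖1 - (starRingEnd ℂ) x * u‖ + ‖u - y‖ := by
        rw [norm_mul]
        have hcx : ‖(starRingEnd ℂ) x‖ = ‖x‖ := Complex.norm_conj x
        nlinarith [norm_nonneg (u - y), norm_nonneg x]

lemma dd_le_one_add_mul (x y : ℂ) : dd x y ≤ 1 + ‖x‖ * ‖y‖ := by
  unfold dd
  calc ‖1 - (starRingEnd ℂ) x * y‖
      ≤ ‖1‖ + ‖(starRingEnd ℂ) x * y‖ := norm_sub_le _ _
    _ = 1 + ‖x‖ * ‖y‖ := by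
        rw [norm_one, norm_mul, Complex.norm_conj]



lemma pd_def (x y : ℂ) : pseudoDist x y = ‖x - y‖ / dd x y := rfl

lemma pd_nonneg (x y : ℂ) : 0 ≤ pseudoDist x y :=
  div_nonneg (norm_nonneg _) (dd_nonneg x y)

lemma pd_symm (x y : ℂ) : pseudoDist x y = pseudoDist y x := by
  rw [pd_def, pd_def, dd_symm, norm_sub_rev]

lemma abs_sub_eq_pd_mul (x y : ℂ) (h : 0 < dd x y) :
    ‖x - y‖ = pseudoDist x y * dd x y := by
  rw [pd_def]; field_simp

lemma QQ_eq (x y : ℂ) (h : 0 < dd x y) : QQ x y = 1 - (pseudoDist x y)^2 := by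
  have h2 := dd_sq x y
  rw [QQ, pd_def, div_pow]
  field_simp
  linarith

lemma QQ_symm (x y : ℂ) : QQ x y = QQ y x := by rw [QQ, QQ, dd_symm, mul_comm]

lemma QQ_pos (x y : ℂ) (hx : ‖x‖ < 1) (hy : ‖y‖ < 1) : 0 < QQ x y := by
  have h := dd_pos x y hx (le_of_lt hy)
  apply div_pos _ (by positivity)
  apply mul_pos <;> nlinarith [norm_nonneg x, norm_nonneg y]

lemma pd_lt_one (x y : ℂ) (hx : ‖x‖ < 1) (hy : ‖y‖ < 1) :
    pseudoDist x y < 1 := by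
  have h := dd_pos x y hx (le_of_lt hy)
  have h1 := QQ_pos x y hx hy
  rw [QQ_eq x y h] at h1
  nlinarith [pd_nonneg x y]

lemma pd_le_one (x y : ℂ) (hx : ‖x‖ < 1) (hy : ‖y‖ < 1) :
    pseudoDist x y ≤ 1 := le_of_lt (pd_lt_one x y hx hy)

lemma QQ_le_one (x y : ℂ) (hx : ‖x‖ < 1) (hy : ‖y‖ < 1) : QQ x y ≤ 1 := by
  rw [QQ_eq x y (dd_pos x y hx (le_of_lt hy))]
  nlinarith [pd_nonneg x y]

lemma QQ_nonneg (x y : ℂ) (hx : ‖x‖ ≤ 1) (hy : ‖y‖ ≤ 1) : 0 ≤ QQ x y := by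
  apply div_nonneg _ (by positivity)
  apply mul_nonneg <;> nlinarith [norm_nonneg x, norm_nonneg y]

lemma dep_pos (x : ℂ) (hx : ‖x‖ < 1) : 0 < dep x := by rw [dep]; linarith

lemma dep_nonneg (x : ℂ) (hx : ‖x‖ ≤ 1) : 0 ≤ dep x := by rw [dep]; linarith

lemma one_sub_sq_ge_dep (x : ℂ) (hx : ‖x‖ ≤ 1) : dep x ≤ 1 - (‖x‖)^2 := by
  rw [dep]; nlinarith [norm_nonneg x]

lemma one_sub_sq_le_two_dep (x : ℂ) : 1 - (‖x‖)^2 ≤ 2 * dep x := by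
  rw [dep]; nlinarith [sq_nonneg (1 - ‖x‖)]

lemma mass_le_QQ (x y : ℂ) (hx : ‖x‖ < 1) (hy : ‖y‖ < 1)
    (h : dd x y ≤ 14 * dep y) :
    1 - (‖x‖)^2 ≤ 196 * dep y * QQ x y := by
  have hdd := dd_pos x y hx hy.le
  rw [QQ, show 196 * dep y * ((1 - (‖x‖)^2) * (1 - (‖y‖)^2) / (dd x y)^2)
      = 196 * dep y * ((1 - (‖x‖)^2) * (1 - (‖y‖)^2)) / (dd x y)^2 from by ring,
    le_div_iff₀ (by positivity)]
  have h1 : dep y ≤ 1 - (‖y‖)^2 := one_sub_sq_ge_dep y hy.le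
  have h2 : 0 ≤ 1 - (‖x‖)^2 := by nlinarith [norm_nonneg x]
  have h3 : 0 < dep y := dep_pos y hy
  have h4 : (dd x y)^2 ≤ 196 * (dep y)^2 := by nlinarith [dd_nonneg x y]
  nlinarith [mul_le_mul_of_nonneg_left h4 h2,
    mul_le_mul_of_nonneg_left (mul_le_mul_of_nonneg_left h1 h3.le) h2]

lemma QQ_le_of_dd_ge (x y : ℂ) (hx : ‖x‖ ≤ 1) (hy : ‖y‖ ≤ 1)
    (t : ℝ) (ht : 0 < t) (h : t ≤ dd x y) :
    QQ x y ≤ (1 - (‖x‖)^2) * (2 * dep y) / t^2 := by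
  rw [QQ]
  apply div_le_div₀
  · apply mul_nonneg
    · nlinarith [norm_nonneg x]
    · nlinarith [dep_nonneg y hy]
  · apply mul_le_mul_of_nonneg_left (one_sub_sq_le_two_dep y)
    nlinarith [norm_nonneg x]
  · positivity
  · nlinarith [dd_nonneg x y]

lemma pd_quasi (x z y : ℂ) (hx : ‖x‖ < 1) (hz : ‖z‖ < 1)
    (hy : ‖y‖ < 1) (ε : ℝ) (hε0 : 0 ≤ ε) (hε : ε ≤ 1/10)
    (h1 : pseudoDist x z ≤ ε) (h2 : pseudoDist z y ≤ ε) : pseudoDist x y ≤ 12 * ε := by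
  have ha := dd_pos x z hx hz.le
  have hb := dd_pos z y hz hy.le
  have hu := dd_pos x y hx hy.le
  have hxz : ‖x - z‖ ≤ ε * dd x z := by
    have := abs_sub_eq_pd_mul x z ha
    nlinarith [dd_nonneg x z, pd_nonneg x z]
  have hzy : ‖z - y‖ ≤ ε * dd z y := by
    have := abs_sub_eq_pd_mul z y hb
    nlinarith [dd_nonneg z y, pd_nonneg z y]
  have hdepz : dep z ≤ dd x z := dep_le_dd_right x z hx.le
  have hdx : 0 < dep x := dep_pos x hx
  have hdz : 0 < dep z := dep_pos z hz
  have hkey : (dd x z)^2 * (1 - ε^2) ≤ 4 * dep x * dep z := by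
    have hsq := dd_sq x z
    have l1 : (1 - (‖x‖)^2) ≤ 2 * dep x := one_sub_sq_le_two_dep x
    have l2 : (1 - (‖z‖)^2) ≤ 2 * dep z := one_sub_sq_le_two_dep z
    have hxz2 : (‖x - z‖)^2 ≤ ε^2 * (dd x z)^2 := by
      nlinarith [norm_nonneg (x - z), dd_nonneg x z]
    have h2x : 0 ≤ 1 - (‖x‖)^2 := by nlinarith [norm_nonneg x]
    have h2z : 0 ≤ 1 - (‖z‖)^2 := by nlinarith [norm_nonneg z]
    nlinarith [mul_le_mul l1 l2 h2z (by linarith : (0:ℝ) ≤ 2 * dep x)]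
  have ha5 : dd x z ≤ 5 * dep x := by
    have e1 : dd x z * (dd x z * (1 - ε^2)) ≤ dd x z * (4 * dep x) := by
      have := mul_le_mul_of_nonneg_left hdepz (show (0:ℝ) ≤ 4 * dep x by linarith)
      nlinarith
    have e2 : dd x z * (1 - ε^2) ≤ 4 * dep x := le_of_mul_le_mul_left e1 ha
    have hε2 : ε^2 ≤ 1/100 := by nlinarith
    nlinarith [dd_nonneg x z]
  have hdepxu : dep x ≤ dd x y := dep_le_dd_left x y hy.le
  have hba : dd z y ≤ dd z x + ‖x - y‖ := dd_le_dd_add_abs z x y hz.le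
  rw [dd_symm z x] at hba
  have htri : ‖x - y‖ ≤ ‖x - z‖ + ‖z - y‖ :=
    norm_sub_le_norm_sub_add_norm_sub x z y
  have hb2 : ε * dd z y ≤ ε * dd x z + ε * ‖x - y‖ := by nlinarith
  have hxy : ‖x - y‖ * (1 - ε) ≤ 2 * ε * dd x z := by nlinarith
  have habs : ‖x - y‖ ≤ dd x y := abs_sub_le_dd x y hx.le hy.le
  have hau : dd x z ≤ 5 * dd x y := by linarith
  have m2 : ε * dd x z ≤ ε * (5 * dd x y) := mul_le_mul_of_nonneg_left hau hε0
  have m1 : ε * ‖x - y‖ ≤ ε * dd x y := mul_le_mul_of_nonneg_left habs hε0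
  have m0 : 0 ≤ ε * dd x y := mul_nonneg hε0 (dd_nonneg x y)
  rw [pd_def, div_le_iff₀ hu]
  linarith [m0, m1, m2, htri, hxz, hzy, hb2]


-- counting lemma
lemma card_le_of_pairwise {ι : Type} (α : ι → ℂ) (A : ℝ) (hA : 0 ≤ A)
    (hrow : ∀ (n : ι) (F : Finset ι), n ∉ F → ∑ k ∈ F, QQ (α k) (α n) ≤ A)
    (O : Finset ι) (q₀ : ℝ) (hq0 : 0 < q₀)
    (hpw : ∀ m ∈ O, ∀ m' ∈ O, m ≠ m' → q₀ ≤ QQ (α m) (α m')) :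
    (O.card : ℝ) * q₀ ≤ A + q₀ := by
  rcases O.eq_empty_or_nonempty with h | ⟨m₀, hm₀⟩
  · subst h
    simp only [Finset.card_empty, Nat.cast_zero, zero_mul]
    linarith
  · have h1 : ∑ _k ∈ O.erase m₀, q₀ ≤ ∑ k ∈ O.erase m₀, QQ (α k) (α m₀) := by
      apply Finset.sum_le_sum
      intro k hk
      exact hpw k (Finset.mem_of_mem_erase hk) m₀ hm₀ (Finset.ne_of_mem_erase hk)
    have h2 : ∑ k ∈ O.erase m₀, QQ (α k) (α m₀) ≤ A :=
      hrow m₀ (O.erase m₀) (Finset.notMem_erase m₀ O)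
    have h3 : ∑ _k ∈ O.erase m₀, q₀ = ((O.card : ℝ) - 1) * q₀ := by
      rw [Finset.sum_const, Finset.card_erase_of_mem hm₀, nsmul_eq_mul]
      have : (1:ℕ) ≤ O.card := Finset.card_pos.mpr ⟨m₀, hm₀⟩
      rw [Nat.cast_sub this]
      norm_num
    nlinarith [h1, h2, h3]


/-- the domination relation -/
def prec (α : ι → ℂ) (k m : ι) : Prop :=
  2 * dep (α k) ≤ dep (α m) ∧ dd (α k) (α m) ≤ 6 * dep (α m)

/-- maximal elements of S -/
def mxl (α : ι → ℂ) (S : Finset ι) (m : ι) : Prop :=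
  m ∈ S ∧ ∀ m' ∈ S, ¬ prec α m m'

lemma dd_self_le (x : ℂ) (hx : ‖x‖ ≤ 1) : dd x x ≤ 2 * dep x := by
  have h := dd_sq x x
  have h2 : (dd x x)^2 = (1 - (‖x‖)^2)^2 := by
    rw [h]; simp [sq]
  have h3 : 0 ≤ 1 - (‖x‖)^2 := by nlinarith [norm_nonneg x]
  have h4 : dd x x = 1 - (‖x‖)^2 := by
    nlinarith [dd_nonneg x x]
  rw [h4]; exact one_sub_sq_le_two_dep x

lemma chain_aux (α : ι → ℂ) (hα : ∀ n, ‖α n‖ < 1) (S : Finset ι) :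
    ∀ (n : ℕ) (k : ι), k ∈ S → (S.filter (fun m => 2 * dep (α k) ≤ dep (α m))).card ≤ n →
    ∃ m, mxl α S m ∧ dep (α k) ≤ dep (α m) ∧
      dd (α k) (α m) ≤ 14 * dep (α m) - 12 * dep (α k) := by
  intro n
  induction n with
  | zero =>
    intro k hk hcard
    by_cases hmax : ∀ m' ∈ S, ¬ prec α k m'
    · exact ⟨k, ⟨hk, hmax⟩, le_refl _, by linarith [dd_self_le (α k) (hα k).le, dep_pos (α k) (hα k)]⟩
    · push_neg at hmax
      obtain ⟨k₁, hk₁S, hprec⟩ := hmax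
      exfalso
      have : k₁ ∈ S.filter (fun m => 2 * dep (α k) ≤ dep (α m)) :=
        Finset.mem_filter.mpr ⟨hk₁S, hprec.1⟩
      have := Finset.card_pos.mpr ⟨k₁, this⟩
      omega
  | succ n ih =>
    intro k hk hcard
    by_cases hmax : ∀ m' ∈ S, ¬ prec α k m'
    · exact ⟨k, ⟨hk, hmax⟩, le_refl _, by linarith [dd_self_le (α k) (hα k).le, dep_pos (α k) (hα k)]⟩
    · push_neg at hmax
      obtain ⟨k₁, hk₁S, hprec⟩ := hmax
      have hd1 : 0 < dep (α k) := dep_pos (α k) (hα k)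
      have hd2 : 0 < dep (α k₁) := dep_pos (α k₁) (hα k₁)
      have hsub : S.filter (fun m => 2 * dep (α k₁) ≤ dep (α m)) ⊂
          S.filter (fun m => 2 * dep (α k) ≤ dep (α m)) := by
        constructor
        · intro m hm
          rw [Finset.mem_filter] at hm ⊢
          exact ⟨hm.1, by linarith [hprec.1, hm.2]⟩
        · intro hcontra
          have hmem : k₁ ∈ S.filter (fun m => 2 * dep (α k) ≤ dep (α m)) :=
            Finset.mem_filter.mpr ⟨hk₁S, hprec.1⟩
          have := hcontra hmem
          rw [Finset.mem_filter] at this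
          linarith [this.2]
      have hlt := Finset.card_lt_card hsub
      obtain ⟨m, hmxl, hdep, hdd⟩ := ih k₁ hk₁S (by omega)
      refine ⟨m, hmxl, by linarith [hprec.1], ?_⟩
      have htri : dd (α k) (α m) ≤ dd (α k) (α k₁) + dd (α k₁) (α m) :=
        dd_triangle _ _ _ (hα k).le (hα k₁).le (hα m).le
      linarith [hprec.2, hprec.1]

lemma chain (α : ι → ℂ) (hα : ∀ n, ‖α n‖ < 1) (S : Finset ι) (k : ι) (hk : k ∈ S) :
    ∃ m, mxl α S m ∧ dep (α k) ≤ dep (α m) ∧ dd (α k) (α m) ≤ 14 * dep (α m) :=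
  let ⟨m, h1, h2, h3⟩ := chain_aux α hα S _ k hk (le_refl _)
  ⟨m, h1, h2, by linarith [dep_pos (α k) (hα k)]⟩

lemma shadow_mass (α : ι → ℂ) (hα : ∀ n, ‖α n‖ < 1) (A : ℝ) (hA : 0 ≤ A)
    (hrow : ∀ (n : ι) (F : Finset ι), n ∉ F → ∑ k ∈ F, QQ (α k) (α n) ≤ A)
    (S : Finset ι) (m : ι) :
    ∑ k ∈ S.filter (fun k => dep (α k) ≤ dep (α m) ∧ dd (α k) (α m) ≤ 14 * dep (α m)),
      (1 - (‖α k‖)^2) ≤ (196 * A + 2) * dep (α m) := by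
  set T := S.filter (fun k => dep (α k) ≤ dep (α m) ∧ dd (α k) (α m) ≤ 14 * dep (α m)) with hT
  have hdm : 0 < dep (α m) := dep_pos (α m) (hα m)
  have herase : ∑ k ∈ T.erase m, (1 - (‖α k‖)^2) ≤ 196 * A * dep (α m) := by
    calc ∑ k ∈ T.erase m, (1 - (‖α k‖)^2)
        ≤ ∑ k ∈ T.erase m, 196 * dep (α m) * QQ (α k) (α m) := by
          apply Finset.sum_le_sum
          intro k hk
          have hkT := Finset.mem_of_mem_erase hk
          rw [hT, Finset.mem_filter] at hkT
          exact mass_le_QQ (α k) (α m) (hα k) (hα m) hkT.2.2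
      _ = 196 * dep (α m) * ∑ k ∈ T.erase m, QQ (α k) (α m) := by
          rw [Finset.mul_sum]
      _ ≤ 196 * dep (α m) * A := by
          apply mul_le_mul_of_nonneg_left (hrow m _ (Finset.notMem_erase m T))
          positivity
      _ = 196 * A * dep (α m) := by ring
  by_cases hmT : m ∈ T
  · have hsplit := Finset.add_sum_erase T (fun k => 1 - (‖α k‖)^2) hmT
    beta_reduce at hsplit
    have hterm : 1 - (‖α m‖)^2 ≤ 2 * dep (α m) := one_sub_sq_le_two_dep (α m)
    nlinarith [herase, hterm, hsplit]
  · rw [← Finset.erase_eq_of_notMem hmT]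
    nlinarith [herase]

open MeasureTheory

lemma sum_length_le (M : Finset ι) (a b : ι → ℝ) (hab : ∀ m ∈ M, a m ≤ b m)
    (W₁ W₂ : ℝ) (hW : W₁ ≤ W₂) (hsub : ∀ m ∈ M, W₁ ≤ a m ∧ b m ≤ W₂)
    (N : ℝ) (hN0 : 0 ≤ N)
    (hcard : ∀ φ : ℝ, ((M.filter (fun m => a m ≤ φ ∧ φ ≤ b m)).card : ℝ) ≤ N) :
    ∑ m ∈ M, (b m - a m) ≤ N * (W₂ - W₁) := by
  have key : ∀ φ : ℝ, (∑ m ∈ M, Set.indicator (Set.Icc (a m) (b m)) (fun _ => (1:ENNReal)) φ)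
      ≤ Set.indicator (Set.Icc W₁ W₂) (fun _ => ENNReal.ofReal N) φ := by
    intro φ
    by_cases hφ : φ ∈ Set.Icc W₁ W₂
    · rw [Set.indicator_of_mem hφ]
      have : (∑ m ∈ M, Set.indicator (Set.Icc (a m) (b m)) (fun _ => (1:ENNReal)) φ)
          = ((M.filter (fun m => a m ≤ φ ∧ φ ≤ b m)).card : ENNReal) := by
        rw [Finset.card_filter]
        rw [Nat.cast_sum]
        apply Finset.sum_congr rfl
        intro m _
        by_cases h : a m ≤ φ ∧ φ ≤ b m
        · rw [Set.indicator_of_mem (Set.mem_Icc.mpr h), if_pos h]; simp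
        · rw [Set.indicator_of_notMem (fun hc => h (Set.mem_Icc.mp hc)), if_neg h]; simp
      rw [this]
      calc ((M.filter (fun m => a m ≤ φ ∧ φ ≤ b m)).card : ENNReal)
          = ENNReal.ofReal ((M.filter (fun m => a m ≤ φ ∧ φ ≤ b m)).card : ℝ) := by
            rw [ENNReal.ofReal_natCast]
        _ ≤ ENNReal.ofReal N := ENNReal.ofReal_le_ofReal (hcard φ)
    · rw [Set.indicator_of_notMem hφ]
      have : ∀ m ∈ M, Set.indicator (Set.Icc (a m) (b m)) (fun _ => (1:ENNReal)) φ = 0 := by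
        intro m hm
        apply Set.indicator_of_notMem
        intro hc
        rw [Set.mem_Icc] at hc
        obtain ⟨h1, h2⟩ := hsub m hm
        exact hφ (Set.mem_Icc.mpr ⟨le_trans h1 hc.1, le_trans hc.2 h2⟩)
      rw [Finset.sum_congr rfl this]
      simp
  have hle : (∑ m ∈ M, ENNReal.ofReal (b m - a m)) ≤ ENNReal.ofReal (N * (W₂ - W₁)) := by
    calc (∑ m ∈ M, ENNReal.ofReal (b m - a m))
        = ∑ m ∈ M, volume (Set.Icc (a m) (b m)) := by
          apply Finset.sum_congr rfl
          intro m _; rw [Real.volume_Icc]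
      _ = ∑ m ∈ M, ∫⁻ φ, Set.indicator (Set.Icc (a m) (b m)) (fun _ => (1:ENNReal)) φ := by
          apply Finset.sum_congr rfl
          intro m _
          rw [lintegral_indicator measurableSet_Icc, setLIntegral_one]
      _ = ∫⁻ φ, ∑ m ∈ M, Set.indicator (Set.Icc (a m) (b m)) (fun _ => (1:ENNReal)) φ := by
          rw [lintegral_finset_sum]
          intro m _
          exact Measurable.indicator measurable_const measurableSet_Icc
      _ ≤ ∫⁻ φ, Set.indicator (Set.Icc W₁ W₂) (fun _ => ENNReal.ofReal N) φ :=
          lintegral_mono key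
      _ = ENNReal.ofReal N * volume (Set.Icc W₁ W₂) := by
          rw [lintegral_indicator measurableSet_Icc, setLIntegral_const, mul_comm]
      _ = ENNReal.ofReal (N * (W₂ - W₁)) := by
          rw [Real.volume_Icc, ← ENNReal.ofReal_mul hN0]
  have hsum : ENNReal.ofReal (∑ m ∈ M, (b m - a m)) = ∑ m ∈ M, ENNReal.ofReal (b m - a m) :=
    ENNReal.ofReal_sum_of_nonneg (fun m hm => by linarith [hab m hm])
  rw [← hsum] at hle
  exact (ENNReal.ofReal_le_ofReal_iff (by nlinarith)).mp hle

def nv (x : ℂ) : ℂ := ((‖x‖ : ℝ) : ℂ)⁻¹ * x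

lemma abs_nv (x : ℂ) (hx : x ≠ 0) : ‖nv x‖ = 1 := by
  rw [nv, norm_mul, norm_inv, Complex.norm_real, Real.norm_eq_abs, abs_of_nonneg (norm_nonneg x)]
  rw [inv_mul_cancel₀ (norm_ne_zero_iff.mpr hx)]

lemma nv_scale (x : ℂ) (hx : x ≠ 0) : ((‖x‖ : ℝ) : ℂ) * nv x = x := by
  rw [nv, ← mul_assoc, mul_inv_cancel₀, one_mul]
  simpa using norm_ne_zero_iff.mpr hx

lemma conj_unit_mul (g : ℂ) (hg : ‖g‖ = 1) (y : ℂ) :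
    ‖(starRingEnd ℂ) g * y‖ = ‖y‖ := by
  rw [norm_mul, Complex.norm_conj, hg, one_mul]

/-- |nv x - nv y| = |1 - conj (nv x) * nv y| -/
lemma chord_eq (x y : ℂ) (hx : x ≠ 0) (hy : y ≠ 0) :
    ‖1 - (starRingEnd ℂ) (nv x) * nv y‖ = ‖nv x - nv y‖ := by
  have h1 : (starRingEnd ℂ) (nv x) * (nv x - nv y)
      = 1 - (starRingEnd ℂ) (nv x) * nv y := by
    have : (starRingEnd ℂ) (nv x) * nv x = ((Complex.normSq (nv x) : ℝ) : ℂ) := by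
      rw [mul_comm, Complex.mul_conj]
    rw [mul_sub, this]
    have : Complex.normSq (nv x) = 1 := by
      have := abs_nv x hx
      rw [← Complex.sq_norm, this]; norm_num
    rw [this]; norm_num
  rw [← h1, norm_mul, Complex.norm_conj, abs_nv x hx, one_mul]

/-- dd in terms of chord distance: dd x y ≤ chord + dep x + dep y and chord ≤ dd + dep x + dep y -/
lemma dd_chord_bounds (x y : ℂ) (hx0 : x ≠ 0) (hy0 : y ≠ 0)
    (hx : ‖x‖ ≤ 1) (hy : ‖y‖ ≤ 1) :
    dd x y ≤ ‖nv x - nv y‖ + (dep x + dep y) ∧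
    ‖nv x - nv y‖ ≤ dd x y + (dep x + dep y) := by
  set g := (starRingEnd ℂ) (nv x) * nv y with hgdef
  have hg : ‖g‖ = 1 := by
    rw [hgdef, norm_mul, Complex.norm_conj, abs_nv x hx0, abs_nv y hy0, one_mul]
  have hrw : (starRingEnd ℂ) x * y = ((‖x‖ * ‖y‖ : ℝ) : ℂ) * g := by
    rw [hgdef]
    nth_rewrite 1 [← nv_scale x hx0, ← nv_scale y hy0]
    rw [map_mul]
    push_cast
    rw [Complex.conj_ofReal]
    ring
  have hρ1 : ‖x‖ * ‖y‖ ≤ 1 := by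
    nlinarith [norm_nonneg x, norm_nonneg y]
  have hρd : 1 - ‖x‖ * ‖y‖ ≤ dep x + dep y := by
    rw [dep, dep]
    nlinarith [norm_nonneg x, norm_nonneg y]
  have hdd : dd x y = ‖1 - ((‖x‖ * ‖y‖ : ℝ) : ℂ) * g‖ := by
    rw [dd, hrw]
  have hkey : (1:ℂ) - ((‖x‖ * ‖y‖ : ℝ) : ℂ) * g
      = (1 - g) + ((1 - ‖x‖ * ‖y‖ : ℝ) : ℂ) * g := by
    push_cast; ring
  have habs1 : ‖((1 - ‖x‖ * ‖y‖ : ℝ) : ℂ) * g‖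
      = 1 - ‖x‖ * ‖y‖ := by
    rw [norm_mul, hg, mul_one, Complex.norm_real, Real.norm_eq_abs, abs_of_nonneg (by linarith)]
  have hchord : ‖1 - g‖ = ‖nv x - nv y‖ := chord_eq x y hx0 hy0
  constructor
  · rw [hdd, hkey]
    calc ‖(1 - g) + ((1 - ‖x‖ * ‖y‖ : ℝ) : ℂ) * g‖
        ≤ ‖1 - g‖ + ‖((1 - ‖x‖ * ‖y‖ : ℝ) : ℂ) * g‖ :=
          norm_add_le _ _
      _ ≤ ‖nv x - nv y‖ + (dep x + dep y) := by
          rw [hchord, habs1]; linarith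
  · have h2 : (1:ℂ) - g = (1 - ((‖x‖ * ‖y‖ : ℝ) : ℂ) * g)
        - ((1 - ‖x‖ * ‖y‖ : ℝ) : ℂ) * g := by
      push_cast; ring
    rw [← hchord, h2]
    calc ‖(1 - ((‖x‖ * ‖y‖ : ℝ) : ℂ) * g)
          - ((1 - ‖x‖ * ‖y‖ : ℝ) : ℂ) * g‖
        ≤ ‖1 - ((‖x‖ * ‖y‖ : ℝ) : ℂ) * g‖
          + ‖((1 - ‖x‖ * ‖y‖ : ℝ) : ℂ) * g‖ := by
          exact norm_sub_le _ _
      _ ≤ dd x y + (dep x + dep y) := by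
          rw [← hdd, habs1]; linarith

lemma re_eq_one_sub (a : ℂ) (ha : ‖a‖ = 1) :
    a.re = 1 - (‖a - 1‖)^2 / 2 := by
  have h1 : Complex.normSq a = 1 := by rw [← Complex.sq_norm, ha]; norm_num
  rw [Complex.normSq_apply] at h1
  rw [Complex.sq_norm, Complex.normSq_apply]
  simp [Complex.sub_re, Complex.sub_im]
  nlinarith

lemma chord_le_im (a b : ℂ) (ha : ‖a‖ = 1) (hb : ‖b‖ = 1)
    (hra : Real.sqrt 2 / 2 ≤ a.re) (hrb : Real.sqrt 2 / 2 ≤ b.re) :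
    ‖a - b‖ ≤ 3/2 * |a.im - b.im| := by
  have hs2 : (Real.sqrt 2)^2 = 2 := Real.sq_sqrt (by norm_num)
  have hs0 : 0 < Real.sqrt 2 := Real.sqrt_pos.mpr (by norm_num)
  have hna : a.re^2 + a.im^2 = 1 := by
    have : Complex.normSq a = 1 := by rw [← Complex.sq_norm, ha]; norm_num
    rw [Complex.normSq_apply] at this; nlinarith
  have hnb : b.re^2 + b.im^2 = 1 := by
    have : Complex.normSq b = 1 := by rw [← Complex.sq_norm, hb]; norm_num
    rw [Complex.normSq_apply] at this; nlinarith
  have hia : |a.im| ≤ Real.sqrt 2 / 2 := by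
    rw [abs_le]; constructor <;> nlinarith
  have hib : |b.im| ≤ Real.sqrt 2 / 2 := by
    rw [abs_le]; constructor <;> nlinarith
  have hre : |a.re - b.re| ≤ |a.im - b.im| := by
    have hkey : |a.re - b.re| * (a.re + b.re) = |a.im - b.im| * |a.im + b.im| := by
      rw [← abs_of_nonneg (show (0:ℝ) ≤ a.re + b.re by nlinarith), ← abs_mul, ← abs_mul,
        show (a.re - b.re) * (a.re + b.re) = -((a.im - b.im) * (a.im + b.im)) from by nlinarith,
        abs_neg]
    have h1 : |a.im + b.im| ≤ Real.sqrt 2 := by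
      calc |a.im + b.im| ≤ |a.im| + |b.im| := abs_add_le _ _
        _ ≤ Real.sqrt 2 := by linarith
    have h2 : Real.sqrt 2 ≤ a.re + b.re := by linarith
    by_contra hc
    push_neg at hc
    have e1 : |a.im - b.im| * (a.re + b.re) < |a.re - b.re| * (a.re + b.re) := by
      apply mul_lt_mul_of_pos_right hc; linarith
    have e2 : |a.im - b.im| * |a.im + b.im| ≤ |a.im - b.im| * Real.sqrt 2 := by
      apply mul_le_mul_of_nonneg_left h1 (abs_nonneg _)
    have e3 : |a.im - b.im| * Real.sqrt 2 ≤ |a.im - b.im| * (a.re + b.re) := by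
      apply mul_le_mul_of_nonneg_left h2 (abs_nonneg _)
    linarith [hkey]
  have habs2 : (‖a - b‖)^2 = (a.re - b.re)^2 + (a.im - b.im)^2 := by
    rw [Complex.sq_norm, Complex.normSq_apply]
    simp [Complex.sub_re, Complex.sub_im]; ring
  have h4 : (‖a - b‖)^2 ≤ (3/2 * |a.im - b.im|)^2 := by
    rw [habs2]
    have := sq_abs (a.re - b.re)
    have := sq_abs (a.im - b.im)
    nlinarith [abs_nonneg (a.im - b.im), abs_nonneg (a.re - b.re), hre]
  apply le_of_pow_le_pow_left₀ (by norm_num) (by positivity) h4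


lemma QQ_ge_of_close (x y : ℂ) (hx : ‖x‖ < 1) (hy : ‖y‖ < 1)
    (h : (dd x y)^2 ≤ 144 * (dep x * dep y)) : 1/144 ≤ QQ x y := by
  have hdd := dd_pos x y hx hy.le
  rw [QQ, le_div_iff₀ (by positivity)]
  have h1 : dep x ≤ 1 - (‖x‖)^2 := one_sub_sq_ge_dep x hx.le
  have h2 : dep y ≤ 1 - (‖y‖)^2 := one_sub_sq_ge_dep y hy.le
  have h3 : 0 < dep x := dep_pos x hx
  have h4 : 0 < dep y := dep_pos y hy
  nlinarith [mul_le_mul h1 h2 h4.le (by linarith)]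

/-- main chart lemma -/
lemma chart_mass (α : ι → ℂ) (hα : ∀ n, ‖α n‖ < 1) (A : ℝ) (hA : 0 ≤ A)
    (hrow : ∀ (n : ι) (F : Finset ι), n ∉ F → ∑ k ∈ F, QQ (α k) (α n) ≤ A)
    (S : Finset ι) (u : ℂ) (hu : ‖u‖ = 1)
    (hS0 : ∀ k ∈ S, α k ≠ 0)
    (hchart : ∀ k ∈ S, Real.sqrt 2 / 2 ≤ ((starRingEnd ℂ) u * nv (α k)).re)
    (W Hd : ℝ) (hW0 : 0 ≤ W) (hHd : 0 ≤ Hd)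
    (hWb : ∀ k ∈ S, |((starRingEnd ℂ) u * nv (α k)).im| ≤ W)
    (hdep : ∀ k ∈ S, dep (α k) ≤ Hd) :
    ∑ k ∈ S, (1 - (‖α k‖)^2)
      ≤ (196*A+2) * ((144*A+1) * (2*W + 4*Hd) / 2) := by
  set tc : ι → ℝ := fun k => ((starRingEnd ℂ) u * nv (α k)).im with htc
  set M : Finset ι := S.filter (fun m => ∀ m' ∈ S, ¬ prec α m m') with hM
  -- assignment function
  have hex : ∀ k ∈ S, ∃ m, (m ∈ M ∧ dep (α k) ≤ dep (α m) ∧ dd (α k) (α m) ≤ 14 * dep (α m)) := by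
    intro k hk
    obtain ⟨m, hmxl, h1, h2⟩ := chain α hα S k hk
    exact ⟨m, Finset.mem_filter.mpr ⟨hmxl.1, hmxl.2⟩, h1, h2⟩
  set g : ι → ι := fun k =>
    if h : ∃ m, (m ∈ M ∧ dep (α k) ≤ dep (α m) ∧ dd (α k) (α m) ≤ 14 * dep (α m))
    then h.choose else k with hg
  have hgmem : ∀ k ∈ S, g k ∈ M ∧ dep (α k) ≤ dep (α (g k)) ∧
      dd (α k) (α (g k)) ≤ 14 * dep (α (g k)) := by
    intro k hk
    have h := hex k hk
    rw [hg]; simp only [dif_pos h]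
    exact h.choose_spec
  -- fiberwise
  have hfib : ∑ k ∈ S, (1 - (‖α k‖)^2)
      = ∑ m ∈ M, ∑ k ∈ S.filter (fun k => g k = m), (1 - (‖α k‖)^2) :=
    (Finset.sum_fiberwise_of_maps_to (fun k hk => (hgmem k hk).1) _).symm
  rw [hfib]
  -- fiber bound
  have hfiber : ∀ m ∈ M, ∑ k ∈ S.filter (fun k => g k = m), (1 - (‖α k‖)^2)
      ≤ (196*A+2) * dep (α m) := by
    intro m _
    have hsub : S.filter (fun k => g k = m) ⊆
        S.filter (fun k => dep (α k) ≤ dep (α m) ∧ dd (α k) (α m) ≤ 14 * dep (α m)) := by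
      intro k hk
      rw [Finset.mem_filter] at hk ⊢
      obtain ⟨hkS, hkg⟩ := hk
      have := hgmem k hkS
      rw [hkg] at this
      exact ⟨hkS, this.2.1, this.2.2⟩
    calc ∑ k ∈ S.filter (fun k => g k = m), (1 - (‖α k‖)^2)
        ≤ ∑ k ∈ S.filter (fun k => dep (α k) ≤ dep (α m) ∧ dd (α k) (α m) ≤ 14 * dep (α m)),
            (1 - (‖α k‖)^2) := by
          apply Finset.sum_le_sum_of_subset_of_nonneg hsub
          intro k hk _
          nlinarith [norm_nonneg (α k), (hα k)]
      _ ≤ (196*A+2) * dep (α m) := shadow_mass α hα A hA hrow S m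
  -- sum over maximal points
  have hMdep : ∑ m ∈ M, dep (α m) ≤ (144*A+1) * (2*W + 4*Hd) / 4 := by
    have hlen : ∑ m ∈ M, ((tc m + 2 * dep (α m)) - (tc m - 2 * dep (α m)))
        ≤ (144*A+1) * ((W + 2*Hd) - (-(W + 2*Hd))) := by
      apply sum_length_le M _ _ ?_ (-(W + 2*Hd)) (W + 2*Hd) (by linarith) ?_ (144*A+1) (by linarith) ?_
      · intro m hm
        have := dep_pos (α m) (hα m)
        linarith
      · intro m hm
        have hMS : m ∈ S := Finset.mem_of_mem_filter m hm
        have h1 := hWb m hMS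
        have h2 := hdep m hMS
        have h3 := dep_pos (α m) (hα m)
        rw [abs_le] at h1
        exact ⟨by linarith [h1.1], by linarith [h1.2]⟩
      · -- overlap count
        intro φ
        set O := M.filter (fun m => tc m - 2 * dep (α m) ≤ φ ∧ φ ≤ tc m + 2 * dep (α m)) with hO
        have hOcard : (O.card : ℝ) * (1/144) ≤ A + 1/144 := by
          apply card_le_of_pairwise α A hA hrow O (1/144) (by norm_num)
          intro m hm m' hm' hne
          -- both maximal, intervals overlap at φ
          have hmO := hm; have hm'O := hm'
          rw [hO, Finset.mem_filter] at hmO hm'O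
          have hmM := hmO.1; have hm'M := hm'O.1
          rw [hM, Finset.mem_filter] at hmM hm'M
          have hmS := hmM.1; have hm'S := hm'M.1
          have hdm := dep_pos (α m) (hα m)
          have hdm' := dep_pos (α m') (hα m')
          -- t distance
          have htd : |tc m - tc m'| ≤ 2 * dep (α m) + 2 * dep (α m') := by
            rw [abs_le]
            constructor <;> [linarith [hmO.2.1, hmO.2.2, hm'O.2.1, hm'O.2.2];
              linarith [hmO.2.1, hmO.2.2, hm'O.2.1, hm'O.2.2]]
          -- chord bound
          have ham : ‖(starRingEnd ℂ) u * nv (α m)‖ = 1 := by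
            rw [conj_unit_mul u hu, abs_nv _ (hS0 m hmS)]
          have ham' : ‖(starRingEnd ℂ) u * nv (α m')‖ = 1 := by
            rw [conj_unit_mul u hu, abs_nv _ (hS0 m' hm'S)]
          have hch : ‖nv (α m) - nv (α m')‖
              ≤ 3 * (dep (α m) + dep (α m')) := by
            have h1 : ‖(starRingEnd ℂ) u * nv (α m) - (starRingEnd ℂ) u * nv (α m')‖
                = ‖nv (α m) - nv (α m')‖ := by
              rw [← mul_sub, conj_unit_mul u hu]
            have h2 := chord_le_im ((starRingEnd ℂ) u * nv (α m)) ((starRingEnd ℂ) u * nv (α m'))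
              ham ham' (hchart m hmS) (hchart m' hm'S)
            rw [h1] at h2
            calc ‖nv (α m) - nv (α m')‖
                ≤ 3/2 * |tc m - tc m'| := h2
              _ ≤ 3/2 * (2 * dep (α m) + 2 * dep (α m')) := by
                  apply mul_le_mul_of_nonneg_left htd; norm_num
              _ = 3 * (dep (α m) + dep (α m')) := by ring
          -- dd bound
          have hddb : dd (α m) (α m') ≤ 4 * (dep (α m) + dep (α m')) := by
            have := (dd_chord_bounds (α m) (α m') (hS0 m hmS) (hS0 m' hm'S)
              (hα m).le (hα m').le).1
            linarith [hch]
          -- not prec in either direction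
          have hnp1 : ¬ prec α m m' := hmM.2 m' hm'S
          have hnp2 : ¬ prec α m' m := hm'M.2 m hmS
          rw [prec, not_and_or] at hnp1 hnp2
          have hcomp1 : ¬ (2 * dep (α m) ≤ dep (α m')) := by
            rcases hnp1 with h | h
            · exact h
            · intro hc; apply h; linarith
          have hcomp2 : ¬ (2 * dep (α m') ≤ dep (α m)) := by
            rcases hnp2 with h | h
            · exact h
            · intro hc; apply h; rw [dd_symm]; linarith
          push_neg at hcomp1 hcomp2
          apply QQ_ge_of_close (α m) (α m') (hα m) (hα m')
          nlinarith [hddb, dd_nonneg (α m) (α m')]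
        have : ((O.card) : ℝ) ≤ 144*A + 1 := by linarith
        exact this
    have hring : ∑ m ∈ M, ((tc m + 2 * dep (α m)) - (tc m - 2 * dep (α m)))
        = 4 * ∑ m ∈ M, dep (α m) := by
      rw [Finset.mul_sum]
      apply Finset.sum_congr rfl
      intro m _; ring
    rw [hring] at hlen
    linarith
  calc ∑ m ∈ M, ∑ k ∈ S.filter (fun k => g k = m), (1 - (‖α k‖)^2)
      ≤ ∑ m ∈ M, (196*A+2) * dep (α m) := Finset.sum_le_sum hfiber
    _ = (196*A+2) * ∑ m ∈ M, dep (α m) := by rw [Finset.mul_sum]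
    _ ≤ (196*A+2) * ((144*A+1) * (2*W + 4*Hd) / 4) := by
        apply mul_le_mul_of_nonneg_left hMdep (by linarith)
    _ ≤ (196*A+2) * ((144*A+1) * (2*W + 4*Hd) / 2) := by
        have h1 : 0 ≤ (144*A+1) * (2*W + 4*Hd) := by positivity
        nlinarith

def CM (A : ℝ) : ℝ := 3*A + 1 + 4*((196*A+2) * ((144*A+1) * (2*1 + 4*1) / 2))
def CB (A : ℝ) : ℝ := 10 * CM A + (196*A+2) * ((144*A+1) * 5)
def Cstar (A : ℝ) : ℝ := 8 * CB A

lemma CM_nonneg (A : ℝ) (hA : 0 ≤ A) : 0 ≤ CM A := by rw [CM]; nlinarith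
lemma CB_nonneg (A : ℝ) (hA : 0 ≤ A) : 0 ≤ CB A := by
  have := CM_nonneg A hA; rw [CB]; nlinarith

lemma shallow_QQ (x y : ℂ) (hx : ‖x‖ ≤ 1/2) (hy : ‖y‖ ≤ 1/2) :
    9/25 ≤ QQ x y := by
  have hx1 : ‖x‖ < 1 := by linarith
  have hy1 : ‖y‖ < 1 := by linarith
  have hdd := dd_pos x y hx1 hy1.le
  have hdd2 : dd x y ≤ 5/4 := by
    have := dd_le_one_add_mul x y
    nlinarith [norm_nonneg x, norm_nonneg y]
  rw [QQ, le_div_iff₀ (by positivity)]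
  have h1 : 3/4 ≤ 1 - (‖x‖)^2 := by nlinarith [norm_nonneg x]
  have h2 : 3/4 ≤ 1 - (‖y‖)^2 := by nlinarith [norm_nonneg y]
  nlinarith

lemma sqrt2_le : Real.sqrt 2 ≤ 1.91 := by
  nlinarith [Real.sq_sqrt (show (0:ℝ) ≤ 2 by norm_num), Real.sqrt_nonneg 2]

lemma ge_sqrt2_half (x : ℝ) (hx : 0 ≤ x) (h : 1/2 ≤ x^2) : Real.sqrt 2 / 2 ≤ x := by
  nlinarith [Real.sq_sqrt (show (0:ℝ) ≤ 2 by norm_num), Real.sqrt_nonneg 2]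

lemma global_mass (α : ι → ℂ) (hα : ∀ n, ‖α n‖ < 1) (A : ℝ) (hA : 0 ≤ A)
    (hrow : ∀ (n : ι) (F : Finset ι), n ∉ F → ∑ k ∈ F, QQ (α k) (α n) ≤ A)
    (S : Finset ι) : ∑ k ∈ S, (1 - (‖α k‖)^2) ≤ CM A := by
  have hmass0 : ∀ k, 0 ≤ 1 - (‖α k‖)^2 := by
    intro k; nlinarith [norm_nonneg (α k), hα k]
  rw [← Finset.sum_filter_add_sum_filter_not S (fun k => ‖α k‖ ≤ 1/2)]
  have hshallow : ∑ k ∈ S.filter (fun k => ‖α k‖ ≤ 1/2),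
      (1 - (‖α k‖)^2) ≤ 3*A + 1 := by
    set T := S.filter (fun k => ‖α k‖ ≤ 1/2) with hT
    have hcard : (T.card : ℝ) * (9/25) ≤ A + 9/25 := by
      apply card_le_of_pairwise α A hA hrow T (9/25) (by norm_num)
      intro m hm m' hm' _
      rw [hT, Finset.mem_filter] at hm hm'
      exact shallow_QQ (α m) (α m') hm.2 hm'.2
    have hone : ∀ k ∈ T, (1 - (‖α k‖)^2) ≤ 1 := by
      intro k _; nlinarith [norm_nonneg (α k)]
    calc ∑ k ∈ T, (1 - (‖α k‖)^2) ≤ ∑ _k ∈ T, (1:ℝ) :=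
          Finset.sum_le_sum hone
      _ = (T.card : ℝ) := by rw [Finset.sum_const, nsmul_eq_mul, mul_one]
      _ ≤ 3*A + 1 := by linarith
  have hdeep : ∑ k ∈ S.filter (fun k => ¬ ‖α k‖ ≤ 1/2),
      (1 - (‖α k‖)^2) ≤ 4*((196*A+2) * ((144*A+1) * (2*1 + 4*1) / 2)) := by
    set D := S.filter (fun k => ¬ ‖α k‖ ≤ 1/2) with hD
    have hDne : ∀ k ∈ D, α k ≠ 0 := by
      intro k hk
      rw [hD, Finset.mem_filter] at hk
      intro hc
      apply hk.2; rw [hc]; simp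
    -- chart for a fixed u, applied to any subset of D where the chart condition holds
    have hchartbound : ∀ (u : ℂ), ‖u‖ = 1 → ∀ T : Finset ι, T ⊆ D →
        (∀ k ∈ T, Real.sqrt 2 / 2 ≤ ((starRingEnd ℂ) u * nv (α k)).re) →
        ∑ k ∈ T, (1 - (‖α k‖)^2)
          ≤ (196*A+2) * ((144*A+1) * (2*1 + 4*1) / 2) := by
      intro u hu T hTD hcond
      apply chart_mass α hα A hA hrow T u hu
        (fun k hk => hDne k (hTD hk)) hcond 1 1 (by norm_num) (by norm_num)
      · intro k hk
        have h1 : ‖(starRingEnd ℂ) u * nv (α k)‖ = 1 := by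
          rw [conj_unit_mul u hu, abs_nv _ (hDne k (hTD hk))]
        calc |((starRingEnd ℂ) u * nv (α k)).im| ≤ ‖(starRingEnd ℂ) u * nv (α k)‖ :=
              Complex.abs_im_le_norm _
          _ = 1 := h1
      · intro k _
        rw [dep]; linarith [norm_nonneg (α k)]
    -- cover by four charts
    set c1 : ι → Prop := fun k => Real.sqrt 2 / 2 ≤ ((starRingEnd ℂ) (1:ℂ) * nv (α k)).re with hc1
    set c2 : ι → Prop := fun k => Real.sqrt 2 / 2 ≤ ((starRingEnd ℂ) (Complex.I) * nv (α k)).re with hc2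
    set c3 : ι → Prop := fun k => Real.sqrt 2 / 2 ≤ ((starRingEnd ℂ) (-1:ℂ) * nv (α k)).re with hc3
    set c4 : ι → Prop := fun k => Real.sqrt 2 / 2 ≤ ((starRingEnd ℂ) (-Complex.I) * nv (α k)).re with hc4
    have hcover : ∀ k ∈ D, c1 k ∨ c2 k ∨ c3 k ∨ c4 k := by
      intro k hk
      have hk0 := hDne k hk
      have hnv : ‖nv (α k)‖ = 1 := abs_nv _ hk0
      have hsum : (nv (α k)).re^2 + (nv (α k)).im^2 = 1 := by
        have : Complex.normSq (nv (α k)) = 1 := by rw [← Complex.sq_norm, hnv]; norm_num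
        rw [Complex.normSq_apply] at this; nlinarith
      set v := nv (α k)
      have e1 : ((starRingEnd ℂ) (1:ℂ) * v).re = v.re := by simp
      have e2 : ((starRingEnd ℂ) (Complex.I) * v).re = v.im := by
        simp [Complex.mul_re]
      have e3 : ((starRingEnd ℂ) (-1:ℂ) * v).re = -v.re := by simp
      have e4 : ((starRingEnd ℂ) (-Complex.I) * v).re = -v.im := by
        simp [Complex.mul_re]
      rw [hc1, hc2, hc3, hc4]
      simp only [e1, e2, e3, e4]
      by_contra hcon
      push_neg at hcon
      obtain ⟨f1, f2, f3, f4⟩ := hcon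
      have hre : |v.re| < Real.sqrt 2 / 2 := by rw [abs_lt]; constructor <;> linarith
      have him : |v.im| < Real.sqrt 2 / 2 := by rw [abs_lt]; constructor <;> linarith
      have hs2 : (Real.sqrt 2)^2 = 2 := Real.sq_sqrt (by norm_num)
      nlinarith [abs_nonneg v.re, abs_nonneg v.im, sq_abs v.re, sq_abs v.im,
        mul_self_lt_mul_self (abs_nonneg v.re) hre, mul_self_lt_mul_self (abs_nonneg v.im) him]
    -- split D into four parts
    set T1 := D.filter c1 with hT1
    set R1 := D.filter (fun k => ¬ c1 k) with hR1
    set T2 := R1.filter c2 with hT2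
    set R2 := R1.filter (fun k => ¬ c2 k) with hR2
    set T3 := R2.filter c3 with hT3
    set R3 := R2.filter (fun k => ¬ c3 k) with hR3
    have hsplit1 : ∑ k ∈ D, (1 - (‖α k‖)^2)
        = ∑ k ∈ T1, (1 - (‖α k‖)^2) + ∑ k ∈ R1, (1 - (‖α k‖)^2) :=
      (Finset.sum_filter_add_sum_filter_not D c1 _).symm
    have hsplit2 : ∑ k ∈ R1, (1 - (‖α k‖)^2)
        = ∑ k ∈ T2, (1 - (‖α k‖)^2) + ∑ k ∈ R2, (1 - (‖α k‖)^2) :=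
      (Finset.sum_filter_add_sum_filter_not R1 c2 _).symm
    have hsplit3 : ∑ k ∈ R2, (1 - (‖α k‖)^2)
        = ∑ k ∈ T3, (1 - (‖α k‖)^2) + ∑ k ∈ R3, (1 - (‖α k‖)^2) :=
      (Finset.sum_filter_add_sum_filter_not R2 c3 _).symm
    have hR1D : R1 ⊆ D := Finset.filter_subset _ _
    have hR2D : R2 ⊆ D := le_trans (Finset.filter_subset _ _) hR1D
    have hR3D : R3 ⊆ D := le_trans (Finset.filter_subset _ _) hR2D
    have b1 := hchartbound 1 (by simp) T1 (Finset.filter_subset _ _)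
      (fun k hk => (Finset.mem_filter.mp hk).2)
    have b2 := hchartbound Complex.I (by simp) T2
      (le_trans (Finset.filter_subset _ _) hR1D)
      (fun k hk => (Finset.mem_filter.mp hk).2)
    have b3 := hchartbound (-1) (by simp) T3
      (le_trans (Finset.filter_subset _ _) hR2D)
      (fun k hk => (Finset.mem_filter.mp hk).2)
    have b4 := hchartbound (-Complex.I) (by simp) R3 hR3D ?_
    · linarith
    · intro k hk
      have hkD := hR3D hk
      have hcov := hcover k hkD
      rw [hR3, Finset.mem_filter, hR2, Finset.mem_filter, hR1, Finset.mem_filter] at hk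
      rcases hcov with h | h | h | h
      · exact absurd h hk.1.1.2
      · exact absurd h hk.1.2
      · exact absurd h hk.2
      · exact h
  rw [CM]
  linarith
lemma box_mass (α : ι → ℂ) (hα : ∀ n, ‖α n‖ < 1) (A : ℝ) (hA : 0 ≤ A)
    (hrow : ∀ (n : ι) (F : Finset ι), n ∉ F → ∑ k ∈ F, QQ (α k) (α n) ≤ A)
    (S : Finset ι) (w : ℂ) (hw : ‖w‖ < 1) (H : ℝ) (hH : 0 < H) :
    ∑ k ∈ S.filter (fun k => dd (α k) w ≤ H), (1 - (‖α k‖)^2) ≤ CB A * H := by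
  set G := S.filter (fun k => dd (α k) w ≤ H) with hG
  have hCM := CM_nonneg A hA
  rcases le_or_gt (1/10 : ℝ) H with hbig | hsmall
  · have := global_mass α hα A hA hrow G
    rw [CB]
    have hX : 0 ≤ (196*A+2)*((144*A+1)*5) := by positivity
    have h10 : CM A ≤ 10 * CM A * H := by nlinarith
    nlinarith [mul_nonneg hX hH.le]
  · rcases G.eq_empty_or_nonempty with he | ⟨k₀, hk₀⟩
    · rw [he, Finset.sum_empty]
      have := CB_nonneg A hA
      positivity
    · have hk₀G := hk₀
      rw [hG, Finset.mem_filter] at hk₀G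
      have hdw : dep w ≤ H := le_trans (dep_le_dd_right (α k₀) w (hα k₀).le) hk₀G.2
      have hwabs : 9/10 < ‖w‖ := by rw [dep] at hdw; linarith
      have hw0 : w ≠ 0 := by
        intro hc; rw [hc] at hwabs; simp at hwabs; linarith
      set u := nv w with hu_def
      have hu : ‖u‖ = 1 := abs_nv w hw0
      have hGprop : ∀ k ∈ G, dd (α k) w ≤ H ∧ dep (α k) ≤ H ∧ α k ≠ 0 := by
        intro k hk
        rw [hG, Finset.mem_filter] at hk
        have hdk : dep (α k) ≤ H := le_trans (dep_le_dd_left (α k) w hw.le) hk.2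
        have hne : α k ≠ 0 := by
          intro hc
          rw [dep, hc] at hdk; simp at hdk; linarith
        exact ⟨hk.2, hdk, hne⟩
      have hchord : ∀ k ∈ G, ‖nv (α k) - u‖ ≤ 3 * H := by
        intro k hk
        obtain ⟨h1, h2, h3⟩ := hGprop k hk
        have := (dd_chord_bounds (α k) w h3 hw0 (hα k).le hw.le).2
        linarith [this]
      have hak : ∀ k ∈ G, ‖(starRingEnd ℂ) u * nv (α k) - 1‖ ≤ 3 * H := by
        intro k hk
        have hns : Complex.normSq u = 1 := by rw [← Complex.sq_norm, hu]; norm_num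
        have hcu : (starRingEnd ℂ) u * u = 1 := by
          rw [mul_comm, Complex.mul_conj, hns]; norm_num
        have h1 : (starRingEnd ℂ) u * nv (α k) - 1 = (starRingEnd ℂ) u * (nv (α k) - u) := by
          rw [mul_sub, hcu]
        rw [h1, conj_unit_mul u hu]
        exact hchord k hk
      apply le_trans (chart_mass α hα A hA hrow G u hu (fun k hk => (hGprop k hk).2.2) ?_
        (3*H) H (by linarith) (by linarith) ?_ (fun k hk => (hGprop k hk).2.1))
      · rw [CB]
        nlinarith
      · intro k hk
        have hone : ‖(starRingEnd ℂ) u * nv (α k)‖ = 1 := by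
          rw [conj_unit_mul u hu, abs_nv _ (hGprop k hk).2.2]
        have hre := re_eq_one_sub ((starRingEnd ℂ) u * nv (α k)) hone
        have h3H := hak k hk
        apply ge_sqrt2_half _ ?_ ?_
        · rw [hre]
          nlinarith [norm_nonneg ((starRingEnd ℂ) u * nv (α k) - 1)]
        · rw [hre]
          have habs2 : (‖(starRingEnd ℂ) u * nv (α k) - 1‖)^2 ≤ (3*H)^2 := by
            nlinarith [norm_nonneg ((starRingEnd ℂ) u * nv (α k) - 1)]
          nlinarith
      · intro k hk
        have h1 : ((starRingEnd ℂ) u * nv (α k)).im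
            = ((starRingEnd ℂ) u * nv (α k) - 1).im := by
          simp [Complex.sub_im]
        rw [h1]
        calc |((starRingEnd ℂ) u * nv (α k) - 1).im|
            ≤ ‖(starRingEnd ℂ) u * nv (α k) - 1‖ := Complex.abs_im_le_norm _
          _ ≤ 3*H := hak k hk

lemma carleson_bound (α : ι → ℂ) (hα : ∀ n, ‖α n‖ < 1) (A : ℝ) (hA : 0 ≤ A)
    (hrow : ∀ (n : ι) (F : Finset ι), n ∉ F → ∑ k ∈ F, QQ (α k) (α n) ≤ A)
    (z : ℂ) (hz : ‖z‖ < 1) (F : Finset ι) :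
    ∑ k ∈ F, QQ (α k) z ≤ Cstar A := by
  set h := dep z with hh_def
  have hh : 0 < h := dep_pos z hz
  have hCB := CB_nonneg A hA
  set jf : ι → ℕ := fun k => Nat.log 2 ⌊dd (α k) z / h⌋₊ with hjf
  have hbounds : ∀ k, (2:ℝ)^(jf k) * h ≤ dd (α k) z ∧ dd (α k) z ≤ (2:ℝ)^(jf k + 1) * h := by
    intro k
    have hdd : h ≤ dd (α k) z := dep_le_dd_right (α k) z (hα k).le
    have hq : 1 ≤ dd (α k) z / h := by rw [le_div_iff₀ hh]; linarith
    have hq0 : 0 ≤ dd (α k) z / h := by linarith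
    have hn1 : 1 ≤ ⌊dd (α k) z / h⌋₊ := Nat.le_floor (by exact_mod_cast hq)
    have hlow : (2:ℝ)^(jf k) ≤ dd (α k) z / h := by
      calc (2:ℝ)^(jf k) = ((2^(jf k) : ℕ) : ℝ) := by push_cast; ring
        _ ≤ (⌊dd (α k) z / h⌋₊ : ℝ) := by
            exact_mod_cast Nat.pow_log_le_self 2 (by omega)
        _ ≤ dd (α k) z / h := Nat.floor_le hq0
    have hhi : dd (α k) z / h < (2:ℝ)^(jf k + 1) := by
      have h1 : dd (α k) z / h < (⌊dd (α k) z / h⌋₊ : ℝ) + 1 := Nat.lt_floor_add_one _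
      have h2 : ⌊dd (α k) z / h⌋₊ < 2^(jf k + 1) := Nat.lt_pow_succ_log_self (by norm_num) _
      have h3 : (⌊dd (α k) z / h⌋₊ : ℝ) + 1 ≤ ((2:ℕ)^(jf k + 1) : ℝ) := by
        exact_mod_cast Nat.succ_le_of_lt h2
      calc dd (α k) z / h < (⌊dd (α k) z / h⌋₊ : ℝ) + 1 := h1
        _ ≤ ((2:ℕ)^(jf k + 1) : ℝ) := h3
        _ = (2:ℝ)^(jf k + 1) := by push_cast; ring
    constructor
    · calc (2:ℝ)^(jf k) * h ≤ (dd (α k) z / h) * h := by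
            apply mul_le_mul_of_nonneg_right hlow hh.le
        _ = dd (α k) z := by field_simp
    · calc dd (α k) z = (dd (α k) z / h) * h := by field_simp
        _ ≤ (2:ℝ)^(jf k + 1) * h := by
            apply mul_le_mul_of_nonneg_right hhi.le hh.le
  set N := F.sup jf with hN
  have hmaps : ∀ k ∈ F, jf k ∈ Finset.range (N+1) := by
    intro k hk
    rw [Finset.mem_range]
    exact Nat.lt_succ_of_le (Finset.le_sup hk)
  rw [← Finset.sum_fiberwise_of_maps_to hmaps (fun k => QQ (α k) z)]
  have hfiber : ∀ i ∈ Finset.range (N+1),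
      ∑ k ∈ F.filter (fun k => jf k = i), QQ (α k) z ≤ 4 * CB A * (1/2)^i := by
    intro i _
    set Fi := F.filter (fun k => jf k = i) with hFi
    have hstep : ∀ k ∈ Fi, QQ (α k) z
        ≤ (1 - (‖α k‖)^2) * ((2 * h) / ((2:ℝ)^i * h)^2) := by
      intro k hk
      rw [hFi, Finset.mem_filter] at hk
      have hb := hbounds k
      rw [hk.2] at hb
      have := QQ_le_of_dd_ge (α k) z (hα k).le hz.le ((2:ℝ)^i * h) (by positivity) hb.1
      calc QQ (α k) z ≤ (1 - (‖α k‖)^2) * (2 * dep z) / ((2:ℝ)^i * h)^2 := this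
        _ = (1 - (‖α k‖)^2) * ((2 * h) / ((2:ℝ)^i * h)^2) := by
            rw [← hh_def]; ring
    have hmass : ∑ k ∈ Fi, (1 - (‖α k‖)^2) ≤ CB A * ((2:ℝ)^(i+1) * h) := by
      have hsubeq : Fi = Fi.filter (fun k => dd (α k) z ≤ (2:ℝ)^(i+1) * h) := by
        rw [Finset.filter_true_of_mem]
        intro k hk
        rw [hFi, Finset.mem_filter] at hk
        have hb := hbounds k
        rw [hk.2] at hb
        exact hb.2
      rw [hsubeq]
      exact box_mass α hα A hA hrow Fi z hz ((2:ℝ)^(i+1) * h) (by positivity)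
    calc ∑ k ∈ Fi, QQ (α k) z
        ≤ ∑ k ∈ Fi, (1 - (‖α k‖)^2) * ((2 * h) / ((2:ℝ)^i * h)^2) :=
          Finset.sum_le_sum hstep
      _ = (∑ k ∈ Fi, (1 - (‖α k‖)^2)) * ((2 * h) / ((2:ℝ)^i * h)^2) := by
          rw [← Finset.sum_mul]
      _ ≤ (CB A * ((2:ℝ)^(i+1) * h)) * ((2 * h) / ((2:ℝ)^i * h)^2) := by
          apply mul_le_mul_of_nonneg_right hmass
          positivity
      _ = 4 * CB A * (1/2)^i := by
          rw [show ((1:ℝ)/2)^i = 1/2^i from by rw [div_pow, one_pow], pow_succ]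
          field_simp
          ring
  calc ∑ i ∈ Finset.range (N+1), ∑ k ∈ F.filter (fun k => jf k = i), QQ (α k) z
      ≤ ∑ i ∈ Finset.range (N+1), 4 * CB A * (1/2)^i := Finset.sum_le_sum hfiber
    _ = 4 * CB A * ∑ i ∈ Finset.range (N+1), (1/2:ℝ)^i := by rw [Finset.mul_sum]
    _ ≤ 4 * CB A * 2 := by
        apply mul_le_mul_of_nonneg_left _ (by linarith)
        rw [geom_sum_eq (by norm_num : (1/2:ℝ) ≠ 1)]
        have : (0:ℝ) ≤ (1/2:ℝ)^(N+1) := by positivity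
        rw [show ((1/2:ℝ) - 1) = -(1/2) from by norm_num]
        rw [div_le_iff_of_neg (by norm_num : (-(1/2):ℝ) < 0)]
        linarith
    _ = Cstar A := by rw [Cstar]; ring


lemma hasProd_iInf {κ : Type} (f : κ → ℝ) (h0 : ∀ i, 0 ≤ f i) (h1 : ∀ i, f i ≤ 1) :
    HasProd f (⨅ G : Finset κ, ∏ i ∈ G, f i) := by
  have hant : Antitone (fun G : Finset κ => ∏ i ∈ G, f i) := by
    intro G G' hGG'
    simp only
    calc ∏ i ∈ G', f i = (∏ i ∈ G' \ G, f i) * ∏ i ∈ G, f i :=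
          (Finset.prod_sdiff hGG').symm
      _ ≤ 1 * ∏ i ∈ G, f i := by
          apply mul_le_mul_of_nonneg_right
          · exact Finset.prod_le_one (fun i _ => h0 i) (fun i _ => h1 i)
          · exact Finset.prod_nonneg (fun i _ => h0 i)
      _ = ∏ i ∈ G, f i := one_mul _
  have hbdd : BddBelow (Set.range (fun G : Finset κ => ∏ i ∈ G, f i)) := by
    refine ⟨0, ?_⟩
    rintro x ⟨G, rfl⟩
    exact Finset.prod_nonneg (fun i _ => h0 i)
  exact tendsto_atTop_ciInf hant hbdd

lemma le_prod_of_le_tprod {κ : Type} (f : κ → ℝ) (h0 : ∀ i, 0 ≤ f i) (h1 : ∀ i, f i ≤ 1)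
    (c : ℝ) (hc : c ≤ ∏' i, f i) (G : Finset κ) : c ≤ ∏ i ∈ G, f i := by
  have h := hasProd_iInf f h0 h1
  rw [h.tprod_eq] at hc
  exact le_trans hc (ciInf_le ⟨0, by rintro x ⟨G', rfl⟩; exact Finset.prod_nonneg (fun i _ => h0 i)⟩ G)

/-- extraction of finite product bounds from uniform separation -/
lemma sep_finite_prod (α : ι → ℂ) (hα : ∀ n, ‖α n‖ < 1) (c : ℝ)
    (hsep : ∀ n : ι, c ≤ ∏' k : {k : ι // k ≠ n}, pseudoDist (α (k : ι)) (α n))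
    (n : ι) (F : Finset ι) (hnF : n ∉ F) : c ≤ ∏ k ∈ F, pseudoDist (α k) (α n) := by
  have h0 : ∀ k : {k : ι // k ≠ n}, 0 ≤ pseudoDist (α (k:ι)) (α n) := fun k => pd_nonneg _ _
  have h1 : ∀ k : {k : ι // k ≠ n}, pseudoDist (α (k:ι)) (α n) ≤ 1 :=
    fun k => pd_le_one _ _ (hα _) (hα _)
  have hG := le_prod_of_le_tprod _ h0 h1 c (hsep n) (F.subtype (· ≠ n))
  calc c ≤ ∏ k ∈ F.subtype (· ≠ n), pseudoDist (α (k:ι)) (α n) := hG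
    _ = ∏ k ∈ F.filter (· ≠ n), pseudoDist (α k) (α n) :=
        Finset.prod_subtype_eq_prod_filter (fun k => pseudoDist (α k) (α n))
    _ = ∏ k ∈ F, pseudoDist (α k) (α n) := by
        congr 1
        apply Finset.filter_true_of_mem
        intro k hk
        intro hc'; subst hc'; exact hnF hk

/-- row sums from finite product bounds -/
lemma rowsum_from_sep (α : ι → ℂ) (hα : ∀ n, ‖α n‖ < 1) (c : ℝ) (hc0 : 0 < c)
    (hprod : ∀ (n : ι) (F : Finset ι), n ∉ F → c ≤ ∏ k ∈ F, pseudoDist (α k) (α n))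
    (n : ι) (F : Finset ι) (hnF : n ∉ F) :
    ∑ k ∈ F, QQ (α k) (α n) ≤ 2 * Real.log c⁻¹ := by
  have hterm : ∀ k ∈ F, 0 < pseudoDist (α k) (α n) := by
    intro k hk
    have h := hprod n {k} (by simp; intro hc'; subst hc'; exact hnF hk)
    rw [Finset.prod_singleton] at h
    linarith
  have hbound : ∀ k ∈ F, QQ (α k) (α n) ≤ -2 * Real.log (pseudoDist (α k) (α n)) := by
    intro k hk
    have hpd := hterm k hk
    have h1 : pseudoDist (α k) (α n) ≤ 1 := pd_le_one _ _ (hα _) (hα _)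
    have hlog : Real.log (pseudoDist (α k) (α n)) ≤ pseudoDist (α k) (α n) - 1 :=
      Real.log_le_sub_one_of_pos hpd
    rw [QQ_eq _ _ (dd_pos _ _ (hα k) (hα n).le)]
    nlinarith [pd_nonneg (α k) (α n)]
  calc ∑ k ∈ F, QQ (α k) (α n) ≤ ∑ k ∈ F, -2 * Real.log (pseudoDist (α k) (α n)) :=
        Finset.sum_le_sum hbound
    _ = -2 * Real.log (∏ k ∈ F, pseudoDist (α k) (α n)) := by
        rw [Real.log_prod (fun k hk => (hterm k hk).ne'), Finset.mul_sum]
    _ ≤ 2 * Real.log c⁻¹ := by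
        have hprodF := hprod n F hnF
        have hlog := Real.log_le_log hc0 hprodF
        rw [Real.log_inv]
        linarith

lemma abs_blaschkeFactor (a z : ℂ) : ‖blaschkeFactor a z‖ = pseudoDist a z := by
  rw [blaschkeFactor]
  by_cases ha : a = 0
  · subst ha
    rw [if_pos rfl, pseudoDist]
    simp
  · rw [if_neg ha, norm_mul, norm_div, norm_div, Complex.norm_real, Real.norm_eq_abs,
      abs_of_nonneg (norm_nonneg a), div_self (norm_ne_zero_iff.mpr ha), one_mul,
      pseudoDist]

/-- far field estimate -/
lemma far_prod_ge (α : ι → ℂ) (hα : ∀ n, ‖α n‖ < 1) (z : ℂ) (hz : ‖z‖ < 1)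
    (Cst : ℝ) (hCst : 0 ≤ Cst)
    (hQsum : ∀ F : Finset ι, ∑ k ∈ F, QQ (α k) z ≤ Cst)
    (ε : ℝ) (hε : 0 < ε) (hfar : ∀ k, ε ≤ pseudoDist (α k) z)
    (G : Finset ι) : Real.exp (-(Cst/ε)) ≤ ∏ k ∈ G, pseudoDist (α k) z := by
  have hterm : ∀ k, -Real.log (pseudoDist (α k) z) ≤ QQ (α k) z / ε := by
    intro k
    have hpd : 0 < pseudoDist (α k) z := lt_of_lt_of_le hε (hfar k)
    have h1 : pseudoDist (α k) z ≤ 1 := pd_le_one _ _ (hα _) hz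
    have hloginv : Real.log (pseudoDist (α k) z)⁻¹ ≤ (pseudoDist (α k) z)⁻¹ - 1 :=
      Real.log_le_sub_one_of_pos (by positivity)
    rw [Real.log_inv] at hloginv
    have hinv : (pseudoDist (α k) z)⁻¹ - 1 = (1 - pseudoDist (α k) z) / pseudoDist (α k) z := by
      field_simp
    have h2 : (1 - pseudoDist (α k) z) / pseudoDist (α k) z
        ≤ (1 - pseudoDist (α k) z) / ε := by
      apply div_le_div_of_nonneg_left (by linarith) hε (hfar k)
    have h3 : (1 - pseudoDist (α k) z) ≤ QQ (α k) z := by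
      rw [QQ_eq _ _ (dd_pos _ _ (hα k) hz.le)]
      nlinarith [pd_nonneg (α k) z]
    have h4 : (1 - pseudoDist (α k) z) / ε ≤ QQ (α k) z / ε :=
      div_le_div_of_nonneg_right h3 hε.le
    linarith [hloginv, hinv, h2, h4]
  have hsum : ∑ k ∈ G, -Real.log (pseudoDist (α k) z) ≤ Cst / ε := by
    calc ∑ k ∈ G, -Real.log (pseudoDist (α k) z) ≤ ∑ k ∈ G, QQ (α k) z / ε :=
          Finset.sum_le_sum (fun k _ => hterm k)
      _ = (∑ k ∈ G, QQ (α k) z) / ε := by rw [Finset.sum_div]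
      _ ≤ Cst / ε := div_le_div_of_nonneg_right (hQsum G) hε.le
  have hlogsum : -(Cst/ε) ≤ Real.log (∏ k ∈ G, pseudoDist (α k) z) := by
    rw [Real.log_prod (fun k _ => (lt_of_lt_of_le hε (hfar k)).ne')]
    have : ∑ k ∈ G, -Real.log (pseudoDist (α k) z) = -∑ k ∈ G, Real.log (pseudoDist (α k) z) := by
      rw [Finset.sum_neg_distrib]
    linarith [hsum, this]
  have hpos : 0 < ∏ k ∈ G, pseudoDist (α k) z :=
    Finset.prod_pos (fun k _ => lt_of_lt_of_le hε (hfar k))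
  calc Real.exp (-(Cst/ε)) ≤ Real.exp (Real.log (∏ k ∈ G, pseudoDist (α k) z)) :=
        Real.exp_le_exp.mpr hlogsum
    _ = ∏ k ∈ G, pseudoDist (α k) z := Real.exp_log hpos


lemma Cstar_nonneg (A : ℝ) (hA : 0 ≤ A) : 0 ≤ Cstar A := by
  have := CB_nonneg A hA; rw [Cstar]; linarith

lemma abs_tprod_ge (α : ι → ℂ) (hα : ∀ n, ‖α n‖ < 1) (z : ℂ)
    (hz : ‖z‖ < 1) (η₀ : ℝ) (hη0 : 0 < η₀) (hη1 : η₀ ≤ 1)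
    (hprod : ∀ G : Finset ι, η₀ ≤ ∏ k ∈ G, pseudoDist (α k) z) :
    η₀ ≤ ‖∏' n, blaschkeFactor (α n) z‖ := by
  set f := fun n => blaschkeFactor (α n) z with hf
  by_cases hm : Multipliable f
  · set M : ℂ →* ℝ :=
      { toFun := fun z => ‖z‖, map_one' := norm_one, map_mul' := norm_mul }
      with hM
    have h1 : HasProd (⇑M ∘ f) (M (∏' n, f n)) := hm.hasProd.map M continuous_norm
    have habs : (⇑M ∘ f) = fun n => pseudoDist (α n) z := by
      funext n
      show ‖blaschkeFactor (α n) z‖ = _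
      exact abs_blaschkeFactor _ _
    rw [habs] at h1
    have h2 := hasProd_iInf (fun n => pseudoDist (α n) z) (fun n => pd_nonneg _ _)
      (fun n => pd_le_one _ _ (hα n) hz)
    have heq := h1.unique h2
    show η₀ ≤ M (∏' n, f n)
    rw [heq]
    exact le_ciInf (fun G => hprod G)
  · rw [tprod_eq_one_of_not_multipliable hm]
    simpa using hη1

end BPaux

set_option maxHeartbeats 2000000 in
/-- Every interpolating Blaschke product has weak Property 𝔥. -/
theorem stmt18 (ι : Type) (hι : Countable ι)
    (B : ℂ → ℂ) (lam : ℂ) (α : ι → ℂ)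
    (hlam : ‖lam‖ = 1)
    (hα : ∀ n, ‖α n‖ < 1)
    (hsum : Summable fun n => 1 - ‖α n‖)
    (hform : ∀ z ∈ Metric.ball (0:ℂ) 1, B z = lam * ∏' n, blaschkeFactor (α n) z)
    (hsep : UniformlySeparated α) :
    ∃ η, WeakPropertyHAt B η := by
  classical
  open BPaux in
  obtain ⟨c, hc0, hsepc⟩ := hsep
  set c' := min c 1 with hc'_def
  have hc'0 : 0 < c' := lt_min hc0 one_pos
  have hc'1 : c' ≤ 1 := min_le_right _ _
  have hprod : ∀ (n : ι) (F : Finset ι), n ∉ F → c' ≤ ∏ k ∈ F, pseudoDist (α k) (α n) :=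
    fun n F hnF => le_trans (min_le_left c 1) (sep_finite_prod α hα c hsepc n F hnF)
  set A := 2 * Real.log c'⁻¹ with hA_def
  have hA : 0 ≤ A := by
    have h1 : (1:ℝ) ≤ c'⁻¹ := (one_le_inv₀ hc'0).mpr hc'1
    have := Real.log_nonneg h1
    rw [hA_def]; linarith
  have hrow : ∀ (n : ι) (F : Finset ι), n ∉ F → ∑ k ∈ F, QQ (α k) (α n) ≤ A :=
    fun n F h => rowsum_from_sep α hα c' hc'0 hprod n F h
  set ε := c' / 24 with hε_def
  have hε0 : 0 < ε := by positivity
  have hε10 : ε ≤ 1/10 := by rw [hε_def]; linarith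
  set η₀ := Real.exp (-(Cstar A / ε)) with hη₀_def
  have hη₀0 : 0 < η₀ := Real.exp_pos _
  have hCst := Cstar_nonneg A hA
  have hη₀1 : η₀ ≤ 1 := by
    rw [hη₀_def]
    apply Real.exp_le_one_iff.mpr
    have : 0 ≤ Cstar A / ε := by positivity
    linarith
  set η := min η₀ (1/2 : ℝ) with hη_def
  have hη0 : 0 < η := lt_min hη₀0 (by norm_num)
  have hη1 : η < 1 := lt_of_le_of_lt (min_le_right _ _) (by norm_num)
  -- |B z| on the disk
  have hBval : ∀ z : ℂ, ‖z‖ < 1 →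
      ‖B z‖ = ‖∏' n, blaschkeFactor (α n) z‖ := by
    intro z hz
    rw [hform z (by rw [Metric.mem_ball, Complex.dist_eq, sub_zero]; exact hz), norm_mul, hlam,
      one_mul]
  -- inclusion of the level set into the union of pseudo-balls
  have hinc : ∀ z ∈ levelSet B η, ∃ n, pseudoDist (α n) z < ε := by
    intro z hzl
    obtain ⟨hz1, hz2⟩ := hzl
    by_contra hcon
    push_neg at hcon
    have hQsum : ∀ F : Finset ι, ∑ k ∈ F, QQ (α k) z ≤ Cstar A :=
      fun F => carleson_bound α hα A hA hrow z hz1 F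
    have hfar := far_prod_ge α hα z hz1 (Cstar A) hCst hQsum ε hε0 hcon
    have habs := abs_tprod_ge α hα z hz1 η₀ hη₀0 hη₀1 (by rw [hη₀_def]; exact hfar)
    rw [← hBval z hz1] at habs
    have : η ≤ ‖B z‖ := le_trans (min_le_left _ _) habs
    linarith
  -- uniqueness of the nearby zero
  have huniq : ∀ z : ℂ, ‖z‖ < 1 → ∀ n m, pseudoDist (α n) z < ε →
      pseudoDist (α m) z < ε → n = m := by
    intro z hz n m hn hm
    by_contra hnm
    have hq := pd_quasi (α n) z (α m) (hα n) hz (hα m) ε hε0.le hε10 hn.le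
      (by rw [pd_symm]; exact hm.le)
    have hpair : c' ≤ pseudoDist (α m) (α n) := by
      have hns : n ∉ ({m} : Finset ι) := by
        simp only [Finset.mem_singleton]; exact hnm
      have := hprod n {m} hns
      rwa [Finset.prod_singleton] at this
    rw [pd_symm (α m) (α n)] at hpair
    have h12 : 12 * ε < c' := by rw [hε_def]; linarith
    linarith
  -- the pseudo-balls
  set D : ι → Set ℂ :=
    fun n => {w : ℂ | ‖w‖ < 1 ∧ ‖α n - w‖ < ε * dd (α n) w} with hD_def
  have hD_iff : ∀ (n : ι) (w : ℂ), w ∈ D n ↔ (‖w‖ < 1 ∧ pseudoDist (α n) w < ε) := by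
    intro n w
    rw [hD_def]; simp only [Set.mem_setOf_eq]
    constructor
    · rintro ⟨h1, h2⟩
      exact ⟨h1, by rw [pd_def, div_lt_iff₀ (dd_pos _ _ (hα n) h1.le)]; exact h2⟩
    · rintro ⟨h1, h2⟩
      exact ⟨h1, by rw [pd_def, div_lt_iff₀ (dd_pos _ _ (hα n) h1.le)] at h2; exact h2⟩
  have hDopen : ∀ n, IsOpen (D n) := by
    intro n
    show IsOpen ({w : ℂ | ‖w‖ < 1}
      ∩ {w : ℂ | ‖α n - w‖ < ε * ‖1 - (starRingEnd ℂ) (α n) * w‖})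
    apply IsOpen.inter
    · exact isOpen_lt continuous_norm continuous_const
    · apply isOpen_lt
      · exact continuous_norm.comp (continuous_const.sub continuous_id)
      · exact continuous_const.mul (continuous_norm.comp
          (continuous_const.sub (continuous_const.mul continuous_id)))
  -- each connected component is inside one pseudo-ball
  have hcomp : ∀ z ∈ levelSet B η, ∃ n, connectedComponentIn (levelSet B η) z ⊆ D n := by
    intro z hz
    obtain ⟨n, hn⟩ := hinc z hz
    have hzD : z ∈ D n := (hD_iff n z).mpr ⟨hz.1, hn⟩
    refine ⟨n, ?_⟩
    apply IsPreconnected.subset_left_of_subset_union (hDopen n)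
      (isOpen_iUnion (fun m : {m : ι // m ≠ n} => hDopen (m : ι))) ?_ ?_ ?_
      isPreconnected_connectedComponentIn
    · rw [Set.disjoint_left]
      intro w hw1 hw2
      rw [Set.mem_iUnion] at hw2
      obtain ⟨m, hm⟩ := hw2
      have h1 := (hD_iff n w).mp hw1
      have h2 := (hD_iff (m : ι) w).mp hm
      exact m.2 (huniq w h1.1 (m : ι) n h2.2 h1.2)
    · intro w hw
      have hwl := connectedComponentIn_subset (levelSet B η) z hw
      obtain ⟨m, hm⟩ := hinc w hwl
      have hwD : w ∈ D m := (hD_iff m w).mpr ⟨hwl.1, hm⟩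
      by_cases hmn : m = n
      · left; rwa [hmn] at hwD
      · right; rw [Set.mem_iUnion]; exact ⟨⟨m, hmn⟩, hwD⟩
    · exact ⟨z, mem_connectedComponentIn hz, hzD⟩
  refine ⟨η, ⟨⟨hη0, hη1⟩, ?_⟩, ?_⟩
  · -- closures of components stay inside the disk
    intro z hz
    obtain ⟨n, hUD⟩ := hcomp z hz
    set mn := (1 - ε^2) * dep (α n) / 2 with hmn_def
    have hdepn := dep_pos (α n) (hα n)
    have hε1 : ε < 1 := by linarith
    have h1e : (0:ℝ) < 1 - ε^2 := by nlinarith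
    have hmn0 : 0 < mn := by rw [hmn_def]; positivity
    have hDC : D n ⊆ {w : ℂ | (‖w‖)^2 ≤ 1 - mn} := by
      intro w hw
      obtain ⟨h1, h2⟩ := (hD_iff n w).mp hw
      have hdd := dd_pos (α n) w (hα n) h1.le
      have hQ : 1 - ε^2 ≤ QQ (α n) w := by
        rw [QQ_eq _ _ hdd]
        nlinarith [pd_nonneg (α n) w]
      have hdddep : dep (α n) ≤ dd (α n) w := dep_le_dd_left (α n) w h1.le
      have he1 : (1 - ε^2) * (dep (α n))^2 ≤
          (1 - (‖α n‖)^2) * (1 - (‖w‖)^2) := by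
        rw [QQ, le_div_iff₀ (by positivity)] at hQ
        nlinarith [h1e, mul_self_le_mul_self hdepn.le hdddep, hQ]
      have he2 : (1 - (‖α n‖)^2) ≤ 2 * dep (α n) := one_sub_sq_le_two_dep (α n)
      have he3 : 0 ≤ 1 - (‖w‖)^2 := by nlinarith [norm_nonneg w]
      show (‖w‖)^2 ≤ 1 - mn
      rw [hmn_def]
      nlinarith
    have hclosed : IsClosed {w : ℂ | (‖w‖)^2 ≤ 1 - mn} :=
      isClosed_le (continuous_norm.pow 2) continuous_const
    have hcl := closure_minimal (le_trans hUD hDC) hclosed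
    intro w hw
    have hw2 : (‖w‖)^2 ≤ 1 - mn := hcl hw
    rw [Metric.mem_ball, Complex.dist_eq, sub_zero]
    nlinarith [norm_nonneg w]
  · -- deltaLevel bound
    rw [deltaLevel]
    apply lt_of_le_of_lt (Real.sSup_le ?_ (by norm_num : (0:ℝ) ≤ 1/2))
      (by norm_num : (1/2:ℝ) < 1)
    rintro d ⟨z₁, z₂, hz₁, hz₂, rfl⟩
    obtain ⟨n, hUD⟩ := hcomp z₁ hz₁
    have h1 : z₁ ∈ D n := hUD (mem_connectedComponentIn hz₁)
    have h2 : z₂ ∈ D n := hUD hz₂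
    obtain ⟨h1a, h1b⟩ := (hD_iff n z₁).mp h1
    obtain ⟨h2a, h2b⟩ := (hD_iff n z₂).mp h2
    have hq := pd_quasi z₁ (α n) z₂ h1a (hα n) h2a ε hε0.le hε10
      (by rw [pd_symm]; exact h1b.le) h2b.le
    calc pseudoDist z₁ z₂ ≤ 12 * ε := hq
      _ ≤ 1/2 := by rw [hε_def]; linarith

end
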